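/- arXiv:math/0201209 — 5 statements merged into one kernel-verified Lean document; each statement's English description precedes it below -/
import Mathlib

section
/- Let G ⊆ ℝ̄ⁿ be a domain whose boundary ∂G (in ℝ̄ⁿ) contains at least two points. Then for all x, y ∈ G, δ_G(x,y) ≤ ρ_G(x,y). -/
open OnePoint

noncomputable section

/-- Inverse hyperbolic cosine: arcosh t = log (t + √(t² − 1)). -/
def arcosh (t : ℝ) : ℝ := Real.log (t + Real.sqrt (t ^ 2 - 1))

/-- Euclidean n-space. -/
abbrev En (n : ℕ) : Type := EuclideanSpace ℝ (Fin n)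

/-- The chordal (spherical) metric on the one-point compactification ℝ̄ⁿ of ℝⁿ. -/
def chordal {n : ℕ} : OnePoint (En n) → OnePoint (En n) → ℝ
  | ∞, ∞ => 0
  | ∞, (y : En n) => 1 / Real.sqrt (1 + ‖y‖ ^ 2)
  | (x : En n), ∞ => 1 / Real.sqrt (1 + ‖x‖ ^ 2)
  | (x : En n), (y : En n) => ‖x - y‖ / (Real.sqrt (1 + ‖x‖ ^ 2) * Real.sqrt (1 + ‖y‖ ^ 2))

/-- The cross-ratio |a,b,c,d| = q(a,c)q(b,d)/(q(a,b)q(c,d)) in the chordal metric. -/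
def crossRatio {n : ℕ} (a b c d : OnePoint (En n)) : ℝ :=
  chordal a c * chordal b d / (chordal a b * chordal c d)

/-- The generalized hyperbolic metric ρ_G(x,y) = sup_{a,b ∈ ∂G} arcosh(1 + |a,x,b,y||a,y,b,x|/2). -/
def rho {n : ℕ} (G : Set (OnePoint (En n))) (x y : OnePoint (En n)) : ℝ :=
  sSup {r : ℝ | ∃ a ∈ frontier G, ∃ b ∈ frontier G,
    r = arcosh (1 + crossRatio a x b y * crossRatio a y b x / 2)}

/-- Seittenranta's metric δ_G(x,y) = sup_{a,b ∈ ∂G} log(1 + |a,x,b,y|). -/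
def seittenranta {n : ℕ} (G : Set (OnePoint (En n))) (x y : OnePoint (En n)) : ℝ :=
  sSup {r : ℝ | ∃ a ∈ frontier G, ∃ b ∈ frontier G,
    r = Real.log (1 + crossRatio a x b y)}

/-- The j-metric j_G(x,y) = log(1 + |x−y|/min(d(x,∂G), d(y,∂G))). -/
def jMetric {n : ℕ} (G : Set (En n)) (x y : En n) : ℝ :=
  Real.log (1 + ‖x - y‖ / min (Metric.infDist x (frontier G)) (Metric.infDist y (frontier G)))

/-- The metric δ_G^p(x,y) = sup_{a,b ∈ ∂G} log(1 + (|x,a,y,b|^p + |x,b,y,a|^p)^(1/p)). -/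
def deltaP {n : ℕ} (p : ℝ) (G : Set (OnePoint (En n))) (x y : OnePoint (En n)) : ℝ :=
  sSup {r : ℝ | ∃ a ∈ frontier G, ∃ b ∈ frontier G,
    r = Real.log (1 + (crossRatio x a y b ^ p + crossRatio x b y a ^ p) ^ (1 / p))}

/-- The metric j_G^p(x,y) = sup_{a ∈ ∂G} log(1 + (|x−y|^p/|x−a|^p + |x−y|^p/|y−a|^p)^(1/p)). -/
def jP {n : ℕ} (p : ℝ) (G : Set (En n)) (x y : En n) : ℝ :=
  sSup {r : ℝ | ∃ a ∈ frontier G,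
    r = Real.log (1 + (‖x - y‖ ^ p / ‖x - a‖ ^ p + ‖x - y‖ ^ p / ‖y - a‖ ^ p) ^ (1 / p))}

section AuxLemmas

variable {n : ℕ}

@[simp] lemma chordal_infty_infty : chordal (∞ : OnePoint (En n)) ∞ = 0 := rfl
@[simp] lemma chordal_infty_coe (y : En n) :
    chordal ∞ (y : OnePoint (En n)) = 1 / Real.sqrt (1 + ‖y‖ ^ 2) := rfl
@[simp] lemma chordal_coe_infty (x : En n) :
    chordal (x : OnePoint (En n)) ∞ = 1 / Real.sqrt (1 + ‖x‖ ^ 2) := rfl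
@[simp] lemma chordal_coe_coe (x y : En n) :
    chordal (x : OnePoint (En n)) y
      = ‖x - y‖ / (Real.sqrt (1 + ‖x‖ ^ 2) * Real.sqrt (1 + ‖y‖ ^ 2)) := rfl

lemma chordal_nonneg (u v : OnePoint (En n)) : 0 ≤ chordal u v := by
  induction u using OnePoint.rec <;> induction v using OnePoint.rec <;> simp <;> positivity

lemma chordal_comm (u v : OnePoint (En n)) : chordal u v = chordal v u := by
  induction u using OnePoint.rec <;> induction v using OnePoint.rec <;> simp
  rw [norm_sub_rev, mul_comm]

lemma chordal_le_one (u v : OnePoint (En n)) : chordal u v ≤ 1 := by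
  induction u using OnePoint.rec with
  | infty =>
    induction v using OnePoint.rec with
    | infty => simp
    | coe y =>
      simp only [chordal_infty_coe]
      rw [div_le_one (by positivity)]
      calc (1:ℝ) = Real.sqrt 1 := by simp
        _ ≤ _ := Real.sqrt_le_sqrt (by nlinarith [sq_nonneg ‖y‖])
  | coe x =>
    induction v using OnePoint.rec with
    | infty =>
      simp only [chordal_coe_infty]
      rw [div_le_one (by positivity)]
      calc (1:ℝ) = Real.sqrt 1 := by simp
        _ ≤ _ := Real.sqrt_le_sqrt (by nlinarith [sq_nonneg ‖x‖])
    | coe y =>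
      simp only [chordal_coe_coe]
      rw [div_le_one (by positivity)]
      rw [← Real.sqrt_mul (by positivity)]
      calc ‖x - y‖ = Real.sqrt (‖x - y‖ ^ 2) := (Real.sqrt_sq (norm_nonneg _)).symm
        _ ≤ Real.sqrt ((1 + ‖x‖ ^ 2) * (1 + ‖y‖ ^ 2)) := by
            apply Real.sqrt_le_sqrt
            have h := norm_sub_le x y
            nlinarith [norm_nonneg (x - y), norm_nonneg x, norm_nonneg y,
              sq_nonneg (1 - ‖x‖ * ‖y‖)]

lemma euclid_ptolemy (a b c d : En n) :
    ‖a - c‖ * ‖b - d‖ ≤ ‖a - b‖ * ‖c - d‖ + ‖a - d‖ * ‖b - c‖ := by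
  have h := EuclideanGeometry.mul_dist_le_mul_dist_add_mul_dist a b c d
  simp only [dist_eq_norm] at h
  rw [mul_comm ‖a - d‖ ‖b - c‖]
  linarith

lemma pt_fin (a b c d : En n) :
    ‖a - c‖ / (Real.sqrt (1 + ‖a‖ ^ 2) * Real.sqrt (1 + ‖c‖ ^ 2))
      * (‖b - d‖ / (Real.sqrt (1 + ‖b‖ ^ 2) * Real.sqrt (1 + ‖d‖ ^ 2)))
    ≤ ‖a - b‖ / (Real.sqrt (1 + ‖a‖ ^ 2) * Real.sqrt (1 + ‖b‖ ^ 2))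
      * (‖c - d‖ / (Real.sqrt (1 + ‖c‖ ^ 2) * Real.sqrt (1 + ‖d‖ ^ 2)))
    + ‖a - d‖ / (Real.sqrt (1 + ‖a‖ ^ 2) * Real.sqrt (1 + ‖d‖ ^ 2))
      * (‖b - c‖ / (Real.sqrt (1 + ‖b‖ ^ 2) * Real.sqrt (1 + ‖c‖ ^ 2))) := by
  have hα : 0 < Real.sqrt (1 + ‖a‖ ^ 2) := Real.sqrt_pos.mpr (by positivity)
  have hβ : 0 < Real.sqrt (1 + ‖b‖ ^ 2) := Real.sqrt_pos.mpr (by positivity)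
  have hγ : 0 < Real.sqrt (1 + ‖c‖ ^ 2) := Real.sqrt_pos.mpr (by positivity)
  have hδ : 0 < Real.sqrt (1 + ‖d‖ ^ 2) := Real.sqrt_pos.mpr (by positivity)
  have h := euclid_ptolemy a b c d
  calc _ = ‖a - c‖ * ‖b - d‖ / (Real.sqrt (1 + ‖a‖ ^ 2) * Real.sqrt (1 + ‖b‖ ^ 2)
        * Real.sqrt (1 + ‖c‖ ^ 2) * Real.sqrt (1 + ‖d‖ ^ 2)) := by ring
    _ ≤ (‖a - b‖ * ‖c - d‖ + ‖a - d‖ * ‖b - c‖) / (Real.sqrt (1 + ‖a‖ ^ 2)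
        * Real.sqrt (1 + ‖b‖ ^ 2) * Real.sqrt (1 + ‖c‖ ^ 2) * Real.sqrt (1 + ‖d‖ ^ 2)) := by
      exact div_le_div_of_nonneg_right h (by positivity)
    _ = _ := by ring

lemma pt_tri_helper {X Y Z p q r : ℝ} (hp : 0 < p) (hq : 0 < q) (hr : 0 < r)
    (hY : 0 ≤ Y) (hZ : 0 ≤ Z) (h : X ≤ Y + Z) :
    X / (p * q * r) ≤ Y / (p * q * r) + Z / (p * q * r) := by
  rw [← add_div]
  exact div_le_div_of_nonneg_right h (by positivity)

lemma pt_a (b c d : En n) :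
    1 / Real.sqrt (1 + ‖c‖ ^ 2)
      * (‖b - d‖ / (Real.sqrt (1 + ‖b‖ ^ 2) * Real.sqrt (1 + ‖d‖ ^ 2)))
    ≤ 1 / Real.sqrt (1 + ‖b‖ ^ 2)
      * (‖c - d‖ / (Real.sqrt (1 + ‖c‖ ^ 2) * Real.sqrt (1 + ‖d‖ ^ 2)))
    + 1 / Real.sqrt (1 + ‖d‖ ^ 2)
      * (‖b - c‖ / (Real.sqrt (1 + ‖b‖ ^ 2) * Real.sqrt (1 + ‖c‖ ^ 2))) := by
  have hβ : 0 < Real.sqrt (1 + ‖b‖ ^ 2) := Real.sqrt_pos.mpr (by positivity)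
  have hγ : 0 < Real.sqrt (1 + ‖c‖ ^ 2) := Real.sqrt_pos.mpr (by positivity)
  have hδ : 0 < Real.sqrt (1 + ‖d‖ ^ 2) := Real.sqrt_pos.mpr (by positivity)
  have h : ‖b - d‖ ≤ ‖c - d‖ + ‖b - c‖ := by
    have := dist_triangle b c d
    simp only [dist_eq_norm] at this
    linarith [this, (norm_sub_rev c d).le, (norm_sub_rev d c).le]
  calc _ = ‖b - d‖ / (Real.sqrt (1 + ‖b‖ ^ 2) * Real.sqrt (1 + ‖c‖ ^ 2)
        * Real.sqrt (1 + ‖d‖ ^ 2)) := by ring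
    _ ≤ ‖c - d‖ / (Real.sqrt (1 + ‖b‖ ^ 2) * Real.sqrt (1 + ‖c‖ ^ 2) * Real.sqrt (1 + ‖d‖ ^ 2))
        + ‖b - c‖ / (Real.sqrt (1 + ‖b‖ ^ 2) * Real.sqrt (1 + ‖c‖ ^ 2)
          * Real.sqrt (1 + ‖d‖ ^ 2)) :=
      pt_tri_helper hβ hγ hδ (norm_nonneg _) (norm_nonneg _) h
    _ = _ := by ring

lemma pt_b (a c d : En n) :
    ‖a - c‖ / (Real.sqrt (1 + ‖a‖ ^ 2) * Real.sqrt (1 + ‖c‖ ^ 2))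
      * (1 / Real.sqrt (1 + ‖d‖ ^ 2))
    ≤ 1 / Real.sqrt (1 + ‖a‖ ^ 2)
      * (‖c - d‖ / (Real.sqrt (1 + ‖c‖ ^ 2) * Real.sqrt (1 + ‖d‖ ^ 2)))
    + ‖a - d‖ / (Real.sqrt (1 + ‖a‖ ^ 2) * Real.sqrt (1 + ‖d‖ ^ 2))
      * (1 / Real.sqrt (1 + ‖c‖ ^ 2)) := by
  have hα : 0 < Real.sqrt (1 + ‖a‖ ^ 2) := Real.sqrt_pos.mpr (by positivity)
  have hγ : 0 < Real.sqrt (1 + ‖c‖ ^ 2) := Real.sqrt_pos.mpr (by positivity)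
  have hδ : 0 < Real.sqrt (1 + ‖d‖ ^ 2) := Real.sqrt_pos.mpr (by positivity)
  have h : ‖a - c‖ ≤ ‖c - d‖ + ‖a - d‖ := by
    have := dist_triangle a d c
    simp only [dist_eq_norm] at this
    linarith [this, (norm_sub_rev d c).le, (norm_sub_rev c d).le]
  calc _ = ‖a - c‖ / (Real.sqrt (1 + ‖a‖ ^ 2) * Real.sqrt (1 + ‖c‖ ^ 2)
        * Real.sqrt (1 + ‖d‖ ^ 2)) := by ring
    _ ≤ ‖c - d‖ / (Real.sqrt (1 + ‖a‖ ^ 2) * Real.sqrt (1 + ‖c‖ ^ 2) * Real.sqrt (1 + ‖d‖ ^ 2))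
        + ‖a - d‖ / (Real.sqrt (1 + ‖a‖ ^ 2) * Real.sqrt (1 + ‖c‖ ^ 2)
          * Real.sqrt (1 + ‖d‖ ^ 2)) :=
      pt_tri_helper hα hγ hδ (norm_nonneg _) (norm_nonneg _) h
    _ = _ := by ring

lemma pt_c (a b d : En n) :
    1 / Real.sqrt (1 + ‖a‖ ^ 2)
      * (‖b - d‖ / (Real.sqrt (1 + ‖b‖ ^ 2) * Real.sqrt (1 + ‖d‖ ^ 2)))
    ≤ ‖a - b‖ / (Real.sqrt (1 + ‖a‖ ^ 2) * Real.sqrt (1 + ‖b‖ ^ 2))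
      * (1 / Real.sqrt (1 + ‖d‖ ^ 2))
    + ‖a - d‖ / (Real.sqrt (1 + ‖a‖ ^ 2) * Real.sqrt (1 + ‖d‖ ^ 2))
      * (1 / Real.sqrt (1 + ‖b‖ ^ 2)) := by
  have hα : 0 < Real.sqrt (1 + ‖a‖ ^ 2) := Real.sqrt_pos.mpr (by positivity)
  have hβ : 0 < Real.sqrt (1 + ‖b‖ ^ 2) := Real.sqrt_pos.mpr (by positivity)
  have hδ : 0 < Real.sqrt (1 + ‖d‖ ^ 2) := Real.sqrt_pos.mpr (by positivity)
  have h : ‖b - d‖ ≤ ‖a - b‖ + ‖a - d‖ := by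
    have := dist_triangle b a d
    simp only [dist_eq_norm] at this
    linarith [this, (norm_sub_rev b a).le, (norm_sub_rev a b).le]
  calc _ = ‖b - d‖ / (Real.sqrt (1 + ‖a‖ ^ 2) * Real.sqrt (1 + ‖b‖ ^ 2)
        * Real.sqrt (1 + ‖d‖ ^ 2)) := by ring
    _ ≤ ‖a - b‖ / (Real.sqrt (1 + ‖a‖ ^ 2) * Real.sqrt (1 + ‖b‖ ^ 2) * Real.sqrt (1 + ‖d‖ ^ 2))
        + ‖a - d‖ / (Real.sqrt (1 + ‖a‖ ^ 2) * Real.sqrt (1 + ‖b‖ ^ 2)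
          * Real.sqrt (1 + ‖d‖ ^ 2)) :=
      pt_tri_helper hα hβ hδ (norm_nonneg _) (norm_nonneg _) h
    _ = _ := by ring

lemma pt_d (a b c : En n) :
    ‖a - c‖ / (Real.sqrt (1 + ‖a‖ ^ 2) * Real.sqrt (1 + ‖c‖ ^ 2))
      * (1 / Real.sqrt (1 + ‖b‖ ^ 2))
    ≤ ‖a - b‖ / (Real.sqrt (1 + ‖a‖ ^ 2) * Real.sqrt (1 + ‖b‖ ^ 2))
      * (1 / Real.sqrt (1 + ‖c‖ ^ 2))
    + 1 / Real.sqrt (1 + ‖a‖ ^ 2)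
      * (‖b - c‖ / (Real.sqrt (1 + ‖b‖ ^ 2) * Real.sqrt (1 + ‖c‖ ^ 2))) := by
  have hα : 0 < Real.sqrt (1 + ‖a‖ ^ 2) := Real.sqrt_pos.mpr (by positivity)
  have hβ : 0 < Real.sqrt (1 + ‖b‖ ^ 2) := Real.sqrt_pos.mpr (by positivity)
  have hγ : 0 < Real.sqrt (1 + ‖c‖ ^ 2) := Real.sqrt_pos.mpr (by positivity)
  have h : ‖a - c‖ ≤ ‖a - b‖ + ‖b - c‖ := by
    have := dist_triangle a b c
    simp only [dist_eq_norm] at this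
    linarith
  calc _ = ‖a - c‖ / (Real.sqrt (1 + ‖a‖ ^ 2) * Real.sqrt (1 + ‖b‖ ^ 2)
        * Real.sqrt (1 + ‖c‖ ^ 2)) := by ring
    _ ≤ ‖a - b‖ / (Real.sqrt (1 + ‖a‖ ^ 2) * Real.sqrt (1 + ‖b‖ ^ 2) * Real.sqrt (1 + ‖c‖ ^ 2))
        + ‖b - c‖ / (Real.sqrt (1 + ‖a‖ ^ 2) * Real.sqrt (1 + ‖b‖ ^ 2)
          * Real.sqrt (1 + ‖c‖ ^ 2)) :=
      pt_tri_helper hα hβ hγ (norm_nonneg _) (norm_nonneg _) h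
    _ = _ := by ring

lemma chordal_ptolemy (a b c d : OnePoint (En n)) :
    chordal a c * chordal b d ≤ chordal a b * chordal c d + chordal a d * chordal b c := by
  induction a using OnePoint.rec <;> induction b using OnePoint.rec <;>
    induction c using OnePoint.rec <;> induction d using OnePoint.rec <;>
    simp only [chordal_infty_infty, chordal_infty_coe, chordal_coe_infty, chordal_coe_coe,
      zero_mul, mul_zero, zero_add, add_zero] <;>
    first
      | positivity
      | exact le_of_eq (by ring1)
      | exact le_refl _
      | exact pt_fin _ _ _ _
      | exact pt_a _ _ _
      | exact pt_b _ _ _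
      | exact pt_c _ _ _
      | exact pt_d _ _ _

lemma chordal_pos {u v : OnePoint (En n)} (h : u ≠ v) : 0 < chordal u v := by
  induction u using OnePoint.rec with
  | infty =>
    induction v using OnePoint.rec with
    | infty => exact absurd rfl h
    | coe y => simp only [chordal_infty_coe]; positivity
  | coe x =>
    induction v using OnePoint.rec with
    | infty => simp only [chordal_coe_infty]; positivity
    | coe y =>
      have hxy : x ≠ y := fun e => h (by rw [e])
      simp only [chordal_coe_coe]
      apply div_pos _ (by positivity)
      rw [norm_sub_pos_iff]
      exact hxy

lemma arcosh_nonneg {u : ℝ} (hu : 1 ≤ u) : 0 ≤ arcosh u :=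
  Real.log_nonneg (le_add_of_le_of_nonneg hu (Real.sqrt_nonneg _))

lemma arcosh_le_arcosh {u v : ℝ} (hu : 1 ≤ u) (huv : u ≤ v) : arcosh u ≤ arcosh v := by
  have h1 : (0:ℝ) < u + Real.sqrt (u ^ 2 - 1) := by
    have := Real.sqrt_nonneg (u ^ 2 - 1); linarith
  exact Real.log_le_log h1 (add_le_add huv (Real.sqrt_le_sqrt (by nlinarith)))

lemma log_eq_arcosh {s : ℝ} (hs : 0 ≤ s) :
    arcosh (1 + s ^ 2 / (2 * (1 + s))) = Real.log (1 + s) := by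
  have h1 : (0:ℝ) < 1 + s := by linarith
  have h1' : (1:ℝ) + s ≠ 0 := ne_of_gt h1
  have h2 : (1 + s ^ 2 / (2 * (1 + s))) ^ 2 - 1 = (s * (s + 2) / (2 * (1 + s))) ^ 2 := by
    field_simp
    ring
  rw [arcosh, h2, Real.sqrt_sq (by positivity)]
  congr 1
  field_simp
  ring

lemma log_le_arcosh {s t : ℝ} (hs : 0 ≤ s) (ht : 0 ≤ t) (h : s / (1 + s) ≤ t) :
    Real.log (1 + s) ≤ arcosh (1 + s * t / 2) := by
  rw [← log_eq_arcosh hs]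
  have h1 : (0:ℝ) < 1 + s := by linarith
  apply arcosh_le_arcosh (le_add_of_nonneg_right (by positivity))
  have h2 : s * (s / (1 + s)) ≤ s * t := mul_le_mul_of_nonneg_left h hs
  have h3 : s ^ 2 / (2 * (1 + s)) = s * (s / (1 + s)) / 2 := by
    field_simp
  rw [h3]
  linarith

lemma frontier_chordal_lb {G : Set (OnePoint (En n))} (hopen : IsOpen G)
    {x : OnePoint (En n)} (hx : x ∈ G) :
    ∃ c : ℝ, 0 < c ∧ ∀ a ∈ frontier G, c ≤ chordal a x := by
  have hdisj : ∀ a ∈ frontier G, a ∉ G := by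
    intro a ha hag
    rw [hopen.frontier_eq] at ha
    exact ha.2 hag
  induction x using OnePoint.rec with
  | infty =>
    obtain ⟨hK, -⟩ := (OnePoint.isOpen_iff_of_mem' hx).mp hopen
    obtain ⟨R, hR⟩ := hK.isBounded.subset_closedBall 0
    refine ⟨1 / Real.sqrt (1 + (max R 0) ^ 2), by positivity, ?_⟩
    intro a ha
    induction a using OnePoint.rec with
    | infty => exact absurd hx (hdisj _ ha)
    | coe a =>
      have haK : a ∈ ((↑) ⁻¹' G : Set (En n))ᶜ := fun hmem => hdisj _ ha hmem
      have h1 : ‖a‖ ≤ max R 0 :=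
        le_trans (mem_closedBall_zero_iff.mp (hR haK)) (le_max_left _ _)
      rw [chordal_coe_infty]
      apply one_div_le_one_div_of_le (by positivity)
      exact Real.sqrt_le_sqrt (by nlinarith [norm_nonneg a])
  | coe x =>
    have hxopen : IsOpen ((↑) ⁻¹' G : Set (En n)) := hopen.preimage OnePoint.continuous_coe
    obtain ⟨r, hr, hball⟩ := Metric.isOpen_iff.mp hxopen x hx
    refine ⟨min (r / (Real.sqrt (1 + (2 * ‖x‖ + 1) ^ 2) * Real.sqrt (1 + ‖x‖ ^ 2)))
      (1 / (Real.sqrt 8 * Real.sqrt (1 + ‖x‖ ^ 2))), by positivity, ?_⟩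
    intro a ha
    have h8 : (1:ℝ) ≤ Real.sqrt 8 := by
      rw [show (1:ℝ) = Real.sqrt 1 by simp]
      exact Real.sqrt_le_sqrt (by norm_num)
    induction a using OnePoint.rec with
    | infty =>
      rw [chordal_infty_coe]
      refine le_trans (min_le_right _ _) ?_
      apply one_div_le_one_div_of_le (by positivity)
      nlinarith [Real.sqrt_pos.mpr (show (0:ℝ) < 1 + ‖x‖ ^ 2 by positivity)]
    | coe a =>
      have hor : r ≤ ‖a - x‖ := by
        by_contra hlt
        push_neg at hlt
        exact hdisj _ ha (hball (by simpa [Metric.mem_ball, dist_eq_norm] using hlt))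
      rw [chordal_coe_coe]
      rcases le_or_gt ‖a‖ (2 * ‖x‖ + 1) with hle | hgt
      · refine le_trans (min_le_left _ _) ?_
        apply div_le_div₀ (norm_nonneg _) hor (by positivity)
        apply mul_le_mul_of_nonneg_right _ (Real.sqrt_nonneg _)
        exact Real.sqrt_le_sqrt (by nlinarith [norm_nonneg a])
      · refine le_trans (min_le_right _ _) ?_
        have hW : 0 < ‖a - x‖ := lt_of_lt_of_le hr hor
        have hkey : Real.sqrt (1 + ‖a‖ ^ 2) ≤ Real.sqrt 8 * ‖a - x‖ := by
          rw [show Real.sqrt 8 * ‖a - x‖ = Real.sqrt (8 * ‖a - x‖ ^ 2) by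
            rw [Real.sqrt_mul (by norm_num), Real.sqrt_sq (norm_nonneg _)]]
          apply Real.sqrt_le_sqrt
          have h1 : ‖a‖ - ‖x‖ ≤ ‖a - x‖ := norm_sub_norm_le a x
          have h2 : (0:ℝ) ≤ ‖x‖ := norm_nonneg x
          nlinarith [norm_nonneg (a - x)]
        rw [div_le_div_iff₀ (by positivity) (by positivity)]
        have := mul_le_mul_of_nonneg_right hkey (Real.sqrt_nonneg (1 + ‖x‖ ^ 2))
        nlinarith [this]


lemma ratio_step {P A B : ℝ} (hP : 0 ≤ P) (hA : 0 < A) (hB : 0 < B) (h : B ≤ A + P) :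
    P / A / (1 + P / A) ≤ P / B := by
  have hAP : 0 < A + P := by linarith
  have hA' : A ≠ 0 := ne_of_gt hA
  have hAP' : A + P ≠ 0 := ne_of_gt hAP
  have e1 : P / A / (1 + P / A) = P / (A + P) := by
    field_simp
  rw [e1]
  exact div_le_div_of_nonneg_left hP hB h


end AuxLemmas

section AuxLemmas2

variable {n : ℕ}

lemma crossRatio_nonneg (a b c d : OnePoint (En n)) : 0 ≤ crossRatio a b c d :=
  div_nonneg (mul_nonneg (chordal_nonneg _ _) (chordal_nonneg _ _))
    (mul_nonneg (chordal_nonneg _ _) (chordal_nonneg _ _))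


end AuxLemmas2

/-- δ_G ≤ ρ_G for any domain G ⊆ ℝ̄ⁿ with at least two boundary points. -/
theorem seittenranta_le_rho (n : ℕ) (hn : 2 ≤ n) (G : Set (OnePoint (En n)))
    (hopen : IsOpen G) (hconn : IsConnected G) (hbdry : (frontier G).Nontrivial)
    (x y : OnePoint (En n)) (hx : x ∈ G) (hy : y ∈ G) :
    seittenranta G x y ≤ rho G x y := by
  obtain ⟨cx, hcx, hbx⟩ := frontier_chordal_lb hopen hx
  obtain ⟨cy, hcy, hby⟩ := frontier_chordal_lb hopen hy
  have key : ∀ a ∈ frontier G, ∀ b ∈ frontier G,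
      Real.log (1 + crossRatio a x b y)
        ≤ arcosh (1 + crossRatio a x b y * crossRatio a y b x / 2) ∧
      arcosh (1 + crossRatio a x b y * crossRatio a y b x / 2)
        ≤ arcosh (1 + (1 / (cx * cy)) ^ 2 / 2) := by
    intro a ha b hb
    have hax : cx ≤ chordal a x := hbx a ha
    have hay : cy ≤ chordal a y := hby a ha
    have hbx' : cx ≤ chordal b x := hbx b hb
    have hby' : cy ≤ chordal b y := hby b hb
    have hax0 : 0 < chordal a x := lt_of_lt_of_le hcx hax
    have hay0 : 0 < chordal a y := lt_of_lt_of_le hcy hay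
    have hbx0 : 0 < chordal b x := lt_of_lt_of_le hcx hbx'
    have hby0 : 0 < chordal b y := lt_of_lt_of_le hcy hby'
    have hP0 : 0 ≤ chordal a b * chordal x y :=
      mul_nonneg (chordal_nonneg _ _) (chordal_nonneg _ _)
    have hP1 : chordal a b * chordal x y ≤ 1 :=
      mul_le_one₀ (chordal_le_one _ _) (chordal_nonneg _ _) (chordal_le_one _ _)
    have hs_eq : crossRatio a x b y
        = chordal a b * chordal x y / (chordal a x * chordal b y) := rfl
    have ht_eq : crossRatio a y b x
        = chordal a b * chordal x y / (chordal a y * chordal b x) := by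
      rw [crossRatio, chordal_comm y x]
    have hs0 : 0 ≤ crossRatio a x b y := crossRatio_nonneg _ _ _ _
    have ht0 : 0 ≤ crossRatio a y b x := crossRatio_nonneg _ _ _ _
    have hpt : chordal a y * chordal b x
        ≤ chordal a x * chordal b y + chordal a b * chordal x y := by
      have h := chordal_ptolemy a b y x
      rw [chordal_comm y x] at h
      linarith
    have hstep : crossRatio a x b y / (1 + crossRatio a x b y) ≤ crossRatio a y b x := by
      rw [hs_eq, ht_eq]
      exact ratio_step hP0 (mul_pos hax0 hby0) (mul_pos hay0 hbx0) hpt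
    refine ⟨log_le_arcosh hs0 ht0 hstep, ?_⟩
    apply arcosh_le_arcosh (le_add_of_nonneg_right (by positivity))
    have hsb : crossRatio a x b y ≤ 1 / (cx * cy) := by
      rw [hs_eq]
      exact div_le_div₀ (by norm_num) hP1 (mul_pos hcx hcy)
        (mul_le_mul hax hby' hcy.le hax0.le)
    have htb : crossRatio a y b x ≤ 1 / (cx * cy) := by
      rw [ht_eq]
      refine div_le_div₀ (by norm_num) hP1 (mul_pos hcx hcy) ?_
      rw [mul_comm cx cy]
      exact mul_le_mul hay hbx' hcx.le hay0.le
    have hmul : crossRatio a x b y * crossRatio a y b x ≤ (1 / (cx * cy)) * (1 / (cx * cy)) :=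
      mul_le_mul hsb htb ht0 (by positivity)
    nlinarith [hmul]
  have hbdd : BddAbove {r : ℝ | ∃ a ∈ frontier G, ∃ b ∈ frontier G,
      r = arcosh (1 + crossRatio a x b y * crossRatio a y b x / 2)} := by
    refine ⟨arcosh (1 + (1 / (cx * cy)) ^ 2 / 2), ?_⟩
    rintro r ⟨a, ha, b, hb, rfl⟩
    exact (key a ha b hb).2
  obtain ⟨a0, ha0, b0, hb0, -⟩ := hbdry
  have h0 : (0:ℝ) ≤ rho G x y := by
    refine le_trans ?_ (le_csSup hbdd ⟨a0, ha0, b0, hb0, rfl⟩)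
    refine arcosh_nonneg (le_add_of_nonneg_right ?_)
    exact div_nonneg (mul_nonneg (crossRatio_nonneg _ _ _ _) (crossRatio_nonneg _ _ _ _))
      (by norm_num)
  unfold seittenranta
  apply Real.sSup_le _ h0
  rintro r ⟨a, ha, b, hb, rfl⟩
  exact le_trans (key a ha b hb).1 (le_csSup hbdd ⟨a, ha, b, hb, rfl⟩)


end
end

section
/- Let G ⊊ ℝⁿ be a domain (so that, viewed as a subset of ℝ̄ⁿ, its boundary has at least two points). Then for all x, y ∈ G, j_G(x,y) ≤ ρ_G(x,y). -/
open OnePoint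

noncomputable section

namespace JRho

open Set


variable {n : ℕ}

lemma sq1_pos (x : En n) : 0 < Real.sqrt (1 + ‖x‖ ^ 2) := Real.sqrt_pos.2 (by positivity)

lemma sq1_le (x : En n) : Real.sqrt (1 + ‖x‖ ^ 2) ≤ 1 + ‖x‖ := by
  have h : (1 : ℝ) + ‖x‖ ^ 2 ≤ (1 + ‖x‖) ^ 2 := by nlinarith [norm_nonneg x]
  calc Real.sqrt (1 + ‖x‖ ^ 2) ≤ Real.sqrt ((1 + ‖x‖) ^ 2) := Real.sqrt_le_sqrt h
    _ = 1 + ‖x‖ := Real.sqrt_sq (by positivity)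

lemma chordal_coe_coe (x y : En n) :
    chordal (x : OnePoint (En n)) (y : OnePoint (En n)) =
      ‖x - y‖ / (Real.sqrt (1 + ‖x‖ ^ 2) * Real.sqrt (1 + ‖y‖ ^ 2)) := rfl

lemma chordal_infty_coe (y : En n) :
    chordal ∞ (y : OnePoint (En n)) = 1 / Real.sqrt (1 + ‖y‖ ^ 2) := rfl

lemma chordal_coe_infty (x : En n) :
    chordal (x : OnePoint (En n)) ∞ = 1 / Real.sqrt (1 + ‖x‖ ^ 2) := rfl

lemma chordal_nonneg (p q : OnePoint (En n)) : 0 ≤ chordal p q := by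
  cases p <;> cases q <;> simp only [chordal] <;> positivity

lemma one_le_sq1 (x : En n) : 1 ≤ Real.sqrt (1 + ‖x‖ ^ 2) := by
  have h := Real.sqrt_le_sqrt (show (1:ℝ) ≤ 1 + ‖x‖ ^ 2 by nlinarith [sq_nonneg ‖x‖])
  rwa [Real.sqrt_one] at h

lemma chordal_le_one (p q : OnePoint (En n)) : chordal p q ≤ 1 := by
  cases p with
  | infty => cases q with
    | infty => norm_num [chordal]
    | coe y =>
        show 1 / Real.sqrt (1 + ‖y‖ ^ 2) ≤ 1
        rw [div_le_one (sq1_pos y)]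
        exact one_le_sq1 y
  | coe x => cases q with
    | infty =>
        show 1 / Real.sqrt (1 + ‖x‖ ^ 2) ≤ 1
        rw [div_le_one (sq1_pos x)]
        exact one_le_sq1 x
    | coe y =>
        show ‖x - y‖ / (Real.sqrt (1 + ‖x‖ ^ 2) * Real.sqrt (1 + ‖y‖ ^ 2)) ≤ 1
        rw [div_le_one (by positivity)]
        have h1 : ‖x - y‖ ≤ ‖x‖ + ‖y‖ := norm_sub_le x y
        have h2 : (‖x‖ + ‖y‖) ^ 2 ≤ (Real.sqrt (1 + ‖x‖ ^ 2) * Real.sqrt (1 + ‖y‖ ^ 2)) ^ 2 := by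
          rw [mul_pow, Real.sq_sqrt (by positivity), Real.sq_sqrt (by positivity)]
          nlinarith [norm_nonneg x, norm_nonneg y, sq_nonneg (‖x‖ * ‖y‖ - 1)]
        nlinarith [norm_nonneg x, norm_nonneg y, mul_pos (sq1_pos x) (sq1_pos y)]

lemma norm_ne_zero_of_ne {a b : En n} (h : a ≠ b) : ‖a - b‖ ≠ 0 := by
  simpa [sub_eq_zero] using h

lemma crossRatio_coe (a x b y : En n) (hax : a ≠ x) (hby : b ≠ y) :
    crossRatio (a : OnePoint (En n)) (x : OnePoint (En n)) (b : OnePoint (En n))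
      (y : OnePoint (En n)) = ‖a - b‖ * ‖x - y‖ / (‖a - x‖ * ‖b - y‖) := by
  have hax' := norm_ne_zero_of_ne hax
  have hby' := norm_ne_zero_of_ne hby
  have sa := (sq1_pos a).ne'
  have sb := (sq1_pos b).ne'
  have sx := (sq1_pos x).ne'
  have sy := (sq1_pos y).ne'
  rw [crossRatio, chordal_coe_coe, chordal_coe_coe, chordal_coe_coe, chordal_coe_coe]
  field_simp

lemma crossRatio_coe_infty (a x y : En n) (hax : a ≠ x) :
    crossRatio (a : OnePoint (En n)) (x : OnePoint (En n)) ∞ (y : OnePoint (En n)) =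
      ‖x - y‖ / ‖a - x‖ := by
  have hax' := norm_ne_zero_of_ne hax
  have sa := (sq1_pos a).ne'
  have sx := (sq1_pos x).ne'
  have sy := (sq1_pos y).ne'
  rw [crossRatio, chordal_coe_infty, chordal_coe_coe, chordal_coe_coe, chordal_infty_coe]
  field_simp

/-- Key inequality: if r² ≤ t(1+r) then log(1+r) ≤ arcosh(1+t/2). -/
lemma log_le_arcosh {r t : ℝ} (hr : 0 ≤ r) (ht : 0 ≤ t) (h : r ^ 2 ≤ t * (1 + r)) :
    Real.log (1 + r) ≤ arcosh (1 + t / 2) := by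
  rw [arcosh]
  have hs : (1 + t / 2) ^ 2 - 1 = t ^ 2 / 4 + t := by ring
  rw [hs]
  have hsq : r - t / 2 ≤ Real.sqrt (t ^ 2 / 4 + t) := by
    rcases le_or_gt (r - t / 2) 0 with h0 | h0
    · exact h0.trans (Real.sqrt_nonneg _)
    · rw [show r - t / 2 = Real.sqrt ((r - t / 2) ^ 2) from (Real.sqrt_sq h0.le).symm]
      apply Real.sqrt_le_sqrt
      nlinarith
  apply Real.log_le_log (by positivity)
  nlinarith [Real.sqrt_nonneg (t ^ 2 / 4 + t)]

lemma arcosh_mono {s M : ℝ} (h1 : 1 ≤ s) (h : s ≤ M) : arcosh s ≤ arcosh M := by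
  rw [arcosh, arcosh]
  have h2 : Real.sqrt (s ^ 2 - 1) ≤ Real.sqrt (M ^ 2 - 1) := by
    apply Real.sqrt_le_sqrt; nlinarith
  apply Real.log_le_log (by positivity)
  linarith

lemma arcosh_nonneg {s : ℝ} (h1 : 1 ≤ s) : 0 ≤ arcosh s := by
  rw [arcosh, show (0:ℝ) = Real.log 1 from Real.log_one.symm]
  exact Real.log_le_log one_pos (by nlinarith [Real.sqrt_nonneg (s ^ 2 - 1)])

/-- First-exit lemma along a continuous path. -/
lemma exists_exit {G : Set (En n)} (hopen : IsOpen G) (f : ℝ → En n)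
    (hf : Continuous f) (h0 : f 0 ∈ G) {s : ℝ} (hs : 0 ≤ s) (hfs : f s ∉ G) :
    ∃ T, 0 < T ∧ T ≤ s ∧ f T ∈ frontier G := by
  set K := Set.Icc 0 s ∩ f ⁻¹' Gᶜ with hK
  have hKc : IsClosed K := isClosed_Icc.inter (hopen.isClosed_compl.preimage hf)
  have hKne : K.Nonempty := ⟨s, ⟨hs, le_refl s⟩, hfs⟩
  have hKbdd : BddBelow K := ⟨0, fun t ht => ht.1.1⟩
  set T := sInf K with hT
  have hTK : T ∈ K := hKc.csInf_mem hKne hKbdd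
  have hT0 : 0 ≤ T := le_csInf hKne fun t ht => ht.1.1
  have hTs : T ≤ s := csInf_le hKbdd ⟨⟨hs, le_refl s⟩, hfs⟩
  have hTpos : 0 < T := by
    rcases hT0.lt_or_eq with h | h
    · exact h
    · exact absurd (h ▸ hTK).2 (by simpa using h0)
  refine ⟨T, hTpos, hTs, ?_⟩
  rw [hopen.frontier_eq, Set.mem_diff]
  constructor
  · have hTc : T ∈ closure (Set.Ico 0 T) := by
      rw [closure_Ico hTpos.ne]
      exact ⟨hT0, le_refl T⟩
    refine map_mem_closure hf hTc ?_
    intro t ht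
    by_contra htG
    exact absurd (csInf_le hKbdd ⟨⟨ht.1, ht.2.le.trans hTs⟩, htG⟩) (not_le.mpr ht.2)
  · exact hTK.2

/-- Image of a Euclidean frontier point is in the frontier of the image. -/
lemma coe_mem_frontier_image {G : Set (En n)} {a : En n} (ha : a ∈ frontier G) :
    (a : OnePoint (En n)) ∈ frontier (((↑) : En n → OnePoint (En n)) '' G) := by
  rw [frontier_eq_closure_inter_closure]
  constructor
  · exact map_mem_closure OnePoint.continuous_coe ha.1 (Set.mapsTo_image _ _)
  · -- a is in the closure of the complement
    have haG : a ∈ closure Gᶜ := by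
      rw [frontier_eq_closure_inter_closure] at ha
      exact ha.2
    refine map_mem_closure OnePoint.continuous_coe haG ?_
    intro z hz
    rintro ⟨w, hwG, hw⟩
    exact hz (OnePoint.coe_injective hw ▸ hwG)

lemma infty_mem_frontier_image {G : Set (En n)} (hG : ¬ Bornology.IsBounded G) :
    (∞ : OnePoint (En n)) ∈ frontier (((↑) : En n → OnePoint (En n)) '' G) := by
  rw [frontier_eq_closure_inter_closure]
  constructor
  · rw [mem_closure_iff]
    intro o ho hmem
    have h := (OnePoint.isOpen_iff_of_mem' hmem).mp ho
    have hb : Bornology.IsBounded (((↑) : En n → OnePoint (En n)) ⁻¹' o)ᶜ := h.1.isBounded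
    have : ¬ G ⊆ (((↑) : En n → OnePoint (En n)) ⁻¹' o)ᶜ := fun hsub => hG (hb.subset hsub)
    obtain ⟨g, hgG, hgo⟩ := Set.not_subset.mp this
    exact ⟨(g : OnePoint (En n)), by simpa using hgo, Set.mem_image_of_mem _ hgG⟩
  · apply subset_closure
    intro ⟨w, _, hw⟩
    exact OnePoint.coe_ne_infty w hw

lemma mem_frontier_image_cases {G : Set (En n)} (hopen : IsOpen G)
    {p : OnePoint (En n)} (hp : p ∈ frontier (((↑) : En n → OnePoint (En n)) '' G)) :
    p = ∞ ∨ ∃ z : En n, z ∉ G ∧ p = (z : OnePoint (En n)) := by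
  cases p with
  | infty => exact Or.inl rfl
  | coe z =>
    refine Or.inr ⟨z, ?_, rfl⟩
    intro hzG
    have himg : IsOpen (((↑) : En n → OnePoint (En n)) '' G) := isOpen_image_coe.mpr hopen
    rw [himg.frontier_eq] at hp
    exact hp.2 (Set.mem_image_of_mem _ hzG)

/-- If x ∈ G and z ∉ G, then the distance from x to the frontier is at most dist x z. -/
lemma infDist_frontier_le {G : Set (En n)} (hopen : IsOpen G) {x z : En n}
    (hx : x ∈ G) (hz : z ∉ G) : Metric.infDist x (frontier G) ≤ dist x z := by
  have hf : Continuous fun t : ℝ => x + t • (z - x) := by continuity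
  obtain ⟨T, hT0, hT1, hTf⟩ := exists_exit hopen _ hf (by simpa using hx) zero_le_one
    (by simpa using hz)
  have h1 : Metric.infDist x (frontier G) ≤ dist x (x + T • (z - x)) :=
    Metric.infDist_le_dist_of_mem hTf
  have h2 : dist x (x + T • (z - x)) = T * dist x z := by
    rw [dist_eq_norm, dist_eq_norm]
    have : x - (x + T • (z - x)) = T • (x - z) := by
      rw [smul_sub, smul_sub]; abel
    rw [this, norm_smul, Real.norm_eq_abs, abs_of_pos hT0]
  rw [h2] at h1
  have := dist_nonneg (x := x) (y := z)
  nlinarith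

lemma crossRatio_nonneg (a b c d : OnePoint (En n)) : 0 ≤ crossRatio a b c d :=
  div_nonneg (mul_nonneg (chordal_nonneg _ _) (chordal_nonneg _ _))
    (mul_nonneg (chordal_nonneg _ _) (chordal_nonneg _ _))

lemma chordal_lower_coe {w z : En n} {c : ℝ} (hc : 0 < c) (hcz : c ≤ dist w z) :
    c / ((1 + ‖w‖ + c) * Real.sqrt (1 + ‖w‖ ^ 2)) ≤ chordal (z : OnePoint (En n)) (w : OnePoint (En n)) := by
  rw [chordal_coe_coe]
  have hZ : Real.sqrt (1 + ‖z‖ ^ 2) ≤ 1 + ‖z‖ := sq1_le z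
  have hZ0 : 0 < Real.sqrt (1 + ‖z‖ ^ 2) := sq1_pos z
  have hK0 : 0 < Real.sqrt (1 + ‖w‖ ^ 2) := sq1_pos w
  have hzw : ‖z‖ ≤ ‖w‖ + ‖z - w‖ := by
    calc ‖z‖ = ‖w + (z - w)‖ := by rw [add_sub_cancel]
      _ ≤ ‖w‖ + ‖z - w‖ := norm_add_le _ _
  have ht : c ≤ ‖z - w‖ := by rwa [dist_comm, dist_eq_norm] at hcz
  have hw0 : (0:ℝ) ≤ ‖w‖ := norm_nonneg w
  rw [div_le_div_iff₀ (by positivity) (by positivity)]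
  nlinarith [mul_le_mul_of_nonneg_left hZ hc.le,
    mul_le_mul_of_nonneg_left hzw hc.le,
    mul_le_mul_of_nonneg_right (mul_le_mul_of_nonneg_left hZ hc.le) hK0.le,
    mul_le_mul_of_nonneg_right
      (show c * (1 + (‖w‖ + ‖z - w‖)) ≤ ‖z - w‖ * (1 + ‖w‖ + c) by nlinarith) hK0.le]

lemma chordal_lower_infty {w : En n} {c : ℝ} (hc : 0 < c) :
    c / ((1 + ‖w‖ + c) * Real.sqrt (1 + ‖w‖ ^ 2)) ≤ chordal ∞ (w : OnePoint (En n)) := by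
  rw [chordal_infty_coe]
  have hK0 : 0 < Real.sqrt (1 + ‖w‖ ^ 2) := sq1_pos w
  have hw0 : (0:ℝ) ≤ ‖w‖ := norm_nonneg w
  rw [div_le_div_iff₀ (by positivity) (by positivity)]
  nlinarith

lemma chordal_lower {G : Set (En n)} (hopen : IsOpen G) {w : En n} (hw : w ∈ G)
    {p : OnePoint (En n)} (hp : p ∈ frontier (((↑) : En n → OnePoint (En n)) '' G))
    {c : ℝ} (hc : 0 < c) (hcd : c ≤ Metric.infDist w (frontier G)) :
    c / ((1 + ‖w‖ + c) * Real.sqrt (1 + ‖w‖ ^ 2)) ≤ chordal p (w : OnePoint (En n)) := by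
  rcases mem_frontier_image_cases hopen hp with rfl | ⟨z, hz, rfl⟩
  · exact chordal_lower_infty hc
  · exact chordal_lower_coe hc (hcd.trans (infDist_frontier_le hopen hw hz))

lemma bddAbove_rhoSet {G : Set (En n)} (hopen : IsOpen G) (hne : G ≠ Set.univ)
    {x y : En n} (hx : x ∈ G) (hy : y ∈ G) :
    BddAbove {r : ℝ | ∃ a ∈ frontier (((↑) : En n → OnePoint (En n)) '' G),
      ∃ b ∈ frontier (((↑) : En n → OnePoint (En n)) '' G),
      r = arcosh (1 + crossRatio a (x : OnePoint (En n)) b (y : OnePoint (En n)) *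
        crossRatio a (y : OnePoint (En n)) b (x : OnePoint (En n)) / 2)} := by
  have hFne : (frontier G).Nonempty := nonempty_frontier_iff.mpr ⟨⟨x, hx⟩, hne⟩
  have hxF : x ∉ frontier G := fun h => (hopen.frontier_eq ▸ h).2 hx
  have hyF : y ∉ frontier G := fun h => (hopen.frontier_eq ▸ h).2 hy
  have hcx : 0 < Metric.infDist x (frontier G) :=
    (isClosed_frontier.notMem_iff_infDist_pos hFne).1 hxF
  have hcy : 0 < Metric.infDist y (frontier G) :=
    (isClosed_frontier.notMem_iff_infDist_pos hFne).1 hyF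
  set cx := Metric.infDist x (frontier G)
  set cy := Metric.infDist y (frontier G)
  set ex := cx / ((1 + ‖x‖ + cx) * Real.sqrt (1 + ‖x‖ ^ 2)) with hex
  set ey := cy / ((1 + ‖y‖ + cy) * Real.sqrt (1 + ‖y‖ ^ 2)) with hey
  have hex0 : 0 < ex := by rw [hex]; positivity
  have hey0 : 0 < ey := by rw [hey]; positivity
  have hcr : ∀ a ∈ frontier (((↑) : En n → OnePoint (En n)) '' G),
      ∀ b ∈ frontier (((↑) : En n → OnePoint (En n)) '' G),
      crossRatio a (x : OnePoint (En n)) b (y : OnePoint (En n)) ≤ 1 / (ex * ey) := by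
    intro a ha b hb
    rw [crossRatio]
    apply div_le_div₀ (by positivity)
    · calc chordal a b * chordal (x : OnePoint (En n)) (y : OnePoint (En n)) ≤ 1 * 1 :=
        mul_le_mul (chordal_le_one _ _) (chordal_le_one _ _) (chordal_nonneg _ _) zero_le_one
      _ = 1 := by ring
    · positivity
    · exact mul_le_mul (chordal_lower hopen hx ha hcx (le_refl _))
        (chordal_lower hopen hy hb hcy (le_refl _)) hey0.le (chordal_nonneg _ _)
  refine ⟨arcosh (1 + (1 / (ex * ey)) ^ 2 / 2), ?_⟩
  rintro r ⟨a, ha, b, hb, rfl⟩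
  apply arcosh_mono
  · nlinarith [crossRatio_nonneg a (x : OnePoint (En n)) b (y : OnePoint (En n)),
      crossRatio_nonneg a (y : OnePoint (En n)) b (x : OnePoint (En n))]
  · have h1 := hcr a ha b hb
    have h2 : crossRatio a (y : OnePoint (En n)) b (x : OnePoint (En n)) ≤ 1 / (ex * ey) := by
      -- same with roles of x,y swapped
      rw [crossRatio]
      apply div_le_div₀ (by positivity)
      · calc chordal a b * chordal (y : OnePoint (En n)) (x : OnePoint (En n)) ≤ 1 * 1 :=
          mul_le_mul (chordal_le_one _ _) (chordal_le_one _ _) (chordal_nonneg _ _) zero_le_one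
        _ = 1 := by ring
      · positivity
      · calc ex * ey = ey * ex := by ring
          _ ≤ chordal a (y : OnePoint (En n)) * chordal b (x : OnePoint (En n)) :=
            mul_le_mul (chordal_lower hopen hy ha hcy (le_refl _))
              (chordal_lower hopen hx hb hcx (le_refl _)) hex0.le (chordal_nonneg _ _)
    have h3 := crossRatio_nonneg a (x : OnePoint (En n)) b (y : OnePoint (En n))
    have h4 := crossRatio_nonneg a (y : OnePoint (En n)) b (x : OnePoint (En n))
    have h5 : (0:ℝ) < 1 / (ex * ey) := by positivity
    nlinarith

lemma arith_bounded {d l u T w : ℝ} (hd : 0 < d) (hl : 0 ≤ l) (hu : 0 < u) (hT : 0 < T)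
    (hw : 0 < w) (huw : w ≤ T * u + l) (hudl : u ≤ d + l) :
    (l / d) ^ 2 ≤ (1 + T) * u * l / (d * (T * u)) * ((1 + T) * u * l / (u * w)) * (1 + l / d) := by
  have h2 : (1 + T) * u * l / (d * (T * u)) * ((1 + T) * u * l / (u * w)) * (1 + l / d)
      = (1 + T) ^ 2 * (d + l) * l ^ 2 / (T * w * d ^ 2) := by
    field_simp
  rw [h2, div_pow, div_le_div_iff₀ (by positivity) (by positivity)]
  have key : T * w ≤ (1 + T) ^ 2 * (d + l) := by
    nlinarith [mul_le_mul_of_nonneg_left huw hT.le,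
      mul_le_mul_of_nonneg_left hudl (mul_nonneg hT.le hT.le),
      mul_le_mul_of_nonneg_left (show l ≤ d + l by linarith) hT.le]
  nlinarith [mul_le_mul_of_nonneg_left key
    (show (0:ℝ) ≤ l ^ 2 * d ^ 2 by positivity)]

lemma arith_unbounded {d l u : ℝ} (hd : 0 < d) (hl : 0 ≤ l) (hu : 0 < u) (hudl : u ≤ d + l) :
    (l / d) ^ 2 ≤ l / d * (l / u) * (1 + l / d) := by
  have h2 : l / d * (l / u) * (1 + l / d) = l ^ 2 * (d + l) / (d ^ 2 * u) := by
    field_simp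
  rw [h2, div_pow, div_le_div_iff₀ (by positivity) (by positivity)]
  nlinarith [mul_le_mul_of_nonneg_left hudl (show (0:ℝ) ≤ l ^ 2 by positivity), sq_nonneg l]

set_option maxHeartbeats 1000000 in
/-- Main estimate assuming d(x) ≤ d(y). -/
lemma key {G : Set (En n)} (hopen : IsOpen G) (hne : G ≠ Set.univ) {x y : En n}
    (hx : x ∈ G) (hy : y ∈ G)
    (hd : Metric.infDist x (frontier G) ≤ Metric.infDist y (frontier G)) :
    jMetric G x y ≤
      rho (((↑) : En n → OnePoint (En n)) '' G) (x : OnePoint (En n)) (y : OnePoint (En n)) := by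
  have hFne : (frontier G).Nonempty := nonempty_frontier_iff.mpr ⟨⟨x, hx⟩, hne⟩
  have hxF : x ∉ frontier G := fun h => (hopen.frontier_eq ▸ h).2 hx
  have hd0 : 0 < Metric.infDist x (frontier G) :=
    (isClosed_frontier.notMem_iff_infDist_pos hFne).1 hxF
  obtain ⟨a, haF, hda⟩ := isClosed_frontier.exists_infDist_eq_dist hFne x
  have haG : a ∉ G := fun h => (hopen.frontier_eq ▸ haF).2 h
  have hax : a ≠ x := fun h => haG (h ▸ hx)
  have hay : a ≠ y := fun h => haG (h ▸ hy)
  set l := ‖x - y‖ with hl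
  set d := Metric.infDist x (frontier G) with hdd
  have hdax : d = ‖a - x‖ := by rw [hda, dist_eq_norm, norm_sub_rev]
  set u := ‖a - y‖ with hu
  have hu0 : 0 < u := by
    rw [hu, norm_pos_iff, sub_ne_zero]; exact hay
  have hl0 : 0 ≤ l := norm_nonneg _
  have hudl : u ≤ d + l := by
    rw [hu, hdax, hl]
    calc ‖a - y‖ = ‖(a - x) + (x - y)‖ := by congr 1; abel
      _ ≤ ‖a - x‖ + ‖x - y‖ := norm_add_le _ _
  have hjm : jMetric G x y = Real.log (1 + l / d) := by
    rw [jMetric, min_eq_left hd]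
  have hbdd := bddAbove_rhoSet hopen hne hx hy
  rw [hjm, rho]
  by_cases hB : Bornology.IsBounded G
  · -- bounded case: exit point on the ray from a through y
    set f : ℝ → En n := fun t => y + t • (y - a) with hf
    have hfc : Continuous f := by
      rw [hf]; continuity
    have hf0 : f 0 ∈ G := by simp [hf, hy]
    obtain ⟨R, hR⟩ := hB.subset_closedBall 0
    set R' := max R 0 with hR'
    have hR'0 : 0 ≤ R' := le_max_right _ _
    have hya : y - a ≠ 0 := sub_ne_zero.mpr (fun h => hay h.symm)
    have hya0 : 0 < ‖y - a‖ := norm_pos_iff.mpr hya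
    set s := (R' + ‖y‖ + 1) / ‖y - a‖ with hs
    have hs0 : 0 ≤ s := by positivity
    have hfs : f s ∉ G := by
      intro hmem
      have h1 : ‖f s‖ ≤ R' := by
        have := hR hmem
        simp only [Metric.mem_closedBall, dist_zero_right] at this
        exact this.trans (le_max_left _ _)
      have h2 : s * ‖y - a‖ - ‖y‖ ≤ ‖f s‖ := by
        have h3 : f s - y = s • (y - a) := by
          show y + s • (y - a) - y = s • (y - a)
          rw [add_sub_cancel_left]
        have h4 : ‖s • (y - a)‖ ≤ ‖f s‖ + ‖y‖ := by
          rw [← h3]; exact norm_sub_le _ _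
        rw [norm_smul, Real.norm_eq_abs, abs_of_nonneg hs0] at h4
        linarith
      rw [hs, div_mul_cancel₀ _ hya0.ne'] at h2
      linarith [norm_nonneg (f s)]
    obtain ⟨T, hT0, hTs, hTF⟩ := exists_exit hopen f hfc hf0 hs0 hfs
    set b := f T with hb
    have hbG : b ∉ G := fun h => (hopen.frontier_eq ▸ hTF).2 h
    have hbx : b ≠ x := fun h => hbG (h ▸ hx)
    have hby : b ≠ y := fun h => hbG (h ▸ hy)
    have hbyn : ‖b - y‖ = T * u := by
      rw [hb, hf]
      have h5 : y + T • (y - a) - y = T • (y - a) := add_sub_cancel_left y _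
      rw [h5, norm_smul, Real.norm_eq_abs, abs_of_pos hT0, hu, norm_sub_rev]
    have habn : ‖a - b‖ = (1 + T) * u := by
      rw [hb, hf, norm_sub_rev]
      have : y + T • (y - a) - a = (1 + T) • (y - a) := by
        rw [add_smul, one_smul, smul_sub]; abel
      rw [this, norm_smul, Real.norm_eq_abs, abs_of_pos (by linarith), hu, norm_sub_rev]
    set w := ‖b - x‖ with hw
    have hw0 : 0 < w := by rw [hw, norm_pos_iff, sub_ne_zero]; exact hbx
    have huw : w ≤ T * u + l := by
      rw [hw, hl]
      calc ‖b - x‖ = ‖(b - y) + (y - x)‖ := by congr 1; abel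
        _ ≤ ‖b - y‖ + ‖y - x‖ := norm_add_le _ _
        _ = T * u + ‖x - y‖ := by rw [hbyn, norm_sub_rev]
    have hmem : arcosh (1 + crossRatio (a : OnePoint (En n)) (x : OnePoint (En n))
        (b : OnePoint (En n)) (y : OnePoint (En n)) *
        crossRatio (a : OnePoint (En n)) (y : OnePoint (En n)) (b : OnePoint (En n))
        (x : OnePoint (En n)) / 2) ∈ {r : ℝ | ∃ a' ∈ frontier (((↑) : En n → OnePoint (En n)) '' G),
        ∃ b' ∈ frontier (((↑) : En n → OnePoint (En n)) '' G),
        r = arcosh (1 + crossRatio a' (x : OnePoint (En n)) b' (y : OnePoint (En n)) *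
          crossRatio a' (y : OnePoint (En n)) b' (x : OnePoint (En n)) / 2)} :=
      ⟨_, coe_mem_frontier_image haF, _, coe_mem_frontier_image hTF, rfl⟩
    refine le_trans ?_ (le_csSup hbdd hmem)
    rw [crossRatio_coe a x b y hax hby, crossRatio_coe a y b x hay hbx]
    apply log_le_arcosh (by positivity) (by positivity)
    have hrw : ‖a - b‖ * ‖x - y‖ / (‖a - x‖ * ‖b - y‖) * (‖a - b‖ * ‖y - x‖ / (‖a - y‖ * ‖b - x‖))
        = (1 + T) * u * l / (d * (T * u)) * ((1 + T) * u * l / (u * w)) := by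
      rw [habn, hbyn, ← hdax, ← hu, ← hw, ← hl, norm_sub_rev y x, ← hl]
      try ring
    rw [hrw]
    exact arith_bounded hd0 hl0 hu0 hT0 hw0 huw hudl
  · -- unbounded case: b = ∞
    have hmem : arcosh (1 + crossRatio (a : OnePoint (En n)) (x : OnePoint (En n)) ∞
        (y : OnePoint (En n)) *
        crossRatio (a : OnePoint (En n)) (y : OnePoint (En n)) ∞
        (x : OnePoint (En n)) / 2) ∈ {r : ℝ | ∃ a' ∈ frontier (((↑) : En n → OnePoint (En n)) '' G),
        ∃ b' ∈ frontier (((↑) : En n → OnePoint (En n)) '' G),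
        r = arcosh (1 + crossRatio a' (x : OnePoint (En n)) b' (y : OnePoint (En n)) *
          crossRatio a' (y : OnePoint (En n)) b' (x : OnePoint (En n)) / 2)} :=
      ⟨_, coe_mem_frontier_image haF, _, infty_mem_frontier_image hB, rfl⟩
    refine le_trans ?_ (le_csSup hbdd hmem)
    rw [crossRatio_coe_infty a x y hax, crossRatio_coe_infty a y x hay]
    apply log_le_arcosh (by positivity) (by positivity)
    have hrw : ‖x - y‖ / ‖a - x‖ * (‖y - x‖ / ‖a - y‖) = l / d * (l / u) := by
      rw [← hdax, ← hu, norm_sub_rev y x, ← hl]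
    rw [hrw]
    exact arith_unbounded hd0 hl0 hu0 hudl

end JRho

/-- j_G ≤ ρ_G for a proper subdomain G of ℝⁿ, where ρ is computed for G viewed as a
subdomain of ℝ̄ⁿ = ℝⁿ ∪ {∞}. -/
theorem jMetric_le_rho (n : ℕ) (hn : 2 ≤ n) (G : Set (En n))
    (hopen : IsOpen G) (hconn : IsConnected G) (hne : G ≠ Set.univ)
    (x y : En n) (hx : x ∈ G) (hy : y ∈ G) :
    jMetric G x y ≤
      rho (((↑) : En n → OnePoint (En n)) '' G) (x : OnePoint (En n)) (y : OnePoint (En n)) := by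
  rcases le_total (Metric.infDist x (frontier G)) (Metric.infDist y (frontier G)) with h | h
  · exact JRho.key hopen hne hx hy h
  · have h1 : jMetric G x y = jMetric G y x := by
      rw [jMetric, jMetric, norm_sub_rev, min_comm]
    have h2 : rho (((↑) : En n → OnePoint (En n)) '' G) (x : OnePoint (En n)) (y : OnePoint (En n))
        = rho (((↑) : En n → OnePoint (En n)) '' G) (y : OnePoint (En n)) (x : OnePoint (En n)) := by
      rw [rho, rho]
      congr 1
      ext r
      constructor <;> rintro ⟨a, ha, b, hb, rfl⟩ <;> exact ⟨a, ha, b, hb, by rw [mul_comm]⟩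
    rw [h1, h2]
    exact JRho.key hopen hne hy hx h

end
end

section
/- Let G ⊊ ℝⁿ be a domain and let 0 < q ≤ p < ∞. Then for all x, y ∈ G, j_G^p(x,y) ≤ j_G^q(x,y) ≤ 2^{1/q − 1/p} · j_G^p(x,y). -/
open OnePoint

noncomputable section

open NNReal
private lemma pm_aux' {p q : ℝ} (hq : 0 < q) (hqp : q ≤ p) (a b : ℝ≥0) :
    (a ^ q + b ^ q) ^ (1 / q) ≤ (2 : ℝ≥0) ^ (1 / q - 1 / p) * (a ^ p + b ^ p) ^ (1 / p) := by
  have hp : 0 < p := hq.trans_le hqp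
  have h1 : (1 : ℝ) ≤ p / q := (one_le_div hq).mpr hqp
  have h := NNReal.rpow_add_le_mul_rpow_add_rpow (a ^ q) (b ^ q) h1
  have h2 := NNReal.rpow_le_rpow h (le_of_lt (one_div_pos.mpr hp))
  have e1 : p / q * (1 / p) = 1 / q := by field_simp; try ring
  have e2 : q * (p / q) = p := by field_simp; try ring
  have e3 : (p / q - 1) * (1 / p) = 1 / q - 1 / p := by field_simp; try ring
  simp only [NNReal.mul_rpow, ← NNReal.rpow_mul, e1, e2, e3] at h2
  exact h2

private lemma pm_real' {p q : ℝ} (hq : 0 < q) (hqp : q ≤ p) {a b : ℝ} (ha : 0 ≤ a) (hb : 0 ≤ b) :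
    (a ^ p + b ^ p) ^ (1 / p) ≤ (a ^ q + b ^ q) ^ (1 / q) ∧
    (a ^ q + b ^ q) ^ (1 / q) ≤ (2 : ℝ) ^ (1 / q - 1 / p) * (a ^ p + b ^ p) ^ (1 / p) := by
  lift a to ℝ≥0 using ha
  lift b to ℝ≥0 using hb
  constructor
  · exact_mod_cast NNReal.rpow_add_rpow_le a b hq hqp
  · exact_mod_cast pm_aux' hq hqp a b

/-- j_G^p ≤ j_G^q ≤ 2^(1/q − 1/p) · j_G^p for 0 < q ≤ p < ∞ and a proper subdomain G of ℝⁿ. -/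
theorem jP_le_jP_le_const_mul_jP (n : ℕ) (hn : 2 ≤ n) (G : Set (En n))
    (hopen : IsOpen G) (hconn : IsConnected G) (hne : G ≠ Set.univ)
    (p q : ℝ) (hq : 0 < q) (hqp : q ≤ p)
    (x y : En n) (hx : x ∈ G) (hy : y ∈ G) :
    jP p G x y ≤ jP q G x y ∧ jP q G x y ≤ (2 : ℝ) ^ (1 / q - 1 / p) * jP p G x y := by

  have hp : 0 < p := hq.trans_le hqp
  -- the frontier is nonempty
  have hfr : (frontier G).Nonempty := nonempty_frontier_iff.mpr ⟨hconn.nonempty, hne⟩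
  obtain ⟨a₀, ha₀⟩ := hfr
  -- distances
  set dx := Metric.infDist x (frontier G) with hdx_def
  set dy := Metric.infDist y (frontier G) with hdy_def
  have hxG : x ∉ frontier G := by
    rw [hopen.frontier_eq]; exact fun h => h.2 hx
  have hyG : y ∉ frontier G := by
    rw [hopen.frontier_eq]; exact fun h => h.2 hy
  have hdx : 0 < dx := (isClosed_frontier.notMem_iff_infDist_pos ⟨a₀, ha₀⟩).mp hxG
  have hdy : 0 < dy := (isClosed_frontier.notMem_iff_infDist_pos ⟨a₀, ha₀⟩).mp hyG
  -- the function inside the sup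
  set F : ℝ → En n → ℝ := fun r a =>
    Real.log (1 + (‖x - y‖ ^ r / ‖x - a‖ ^ r + ‖x - y‖ ^ r / ‖y - a‖ ^ r) ^ (1 / r)) with hF
  have hjP : ∀ r, jP r G x y = sSup {s : ℝ | ∃ a ∈ frontier G, s = F r a} := fun r => rfl
  -- rewrite F as log (1 + (A^r + B^r)^(1/r))
  have hFeq : ∀ r : ℝ, ∀ a ∈ frontier G,
      F r a = Real.log (1 + ((‖x - y‖ / ‖x - a‖) ^ r + (‖x - y‖ / ‖y - a‖) ^ r) ^ (1 / r)) := by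
    intro r a _
    rw [hF]
    simp only [Real.div_rpow (norm_nonneg _) (norm_nonneg _)]
  -- distances from boundary points positive
  have hxa : ∀ a ∈ frontier G, 0 < ‖x - a‖ := by
    intro a ha
    have := Metric.infDist_le_dist_of_mem (x := x) ha
    rw [dist_eq_norm] at this
    exact lt_of_lt_of_le hdx this
  have hya : ∀ a ∈ frontier G, 0 < ‖y - a‖ := by
    intro a ha
    have := Metric.infDist_le_dist_of_mem (x := y) ha
    rw [dist_eq_norm] at this
    exact lt_of_lt_of_le hdy this
  -- pointwise inequalities
  have hpt1 : ∀ a ∈ frontier G, F p a ≤ F q a := by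
    intro a ha
    rw [hFeq p a ha, hFeq q a ha]
    have h := (pm_real' hq hqp (div_nonneg (norm_nonneg _) (norm_nonneg _))
      (div_nonneg (norm_nonneg _) (norm_nonneg _)) (a := ‖x - y‖ / ‖x - a‖)
      (b := ‖x - y‖ / ‖y - a‖)).1
    have hpos : (0:ℝ) < 1 + ((‖x - y‖ / ‖x - a‖) ^ p + (‖x - y‖ / ‖y - a‖) ^ p) ^ (1 / p) := by
      positivity
    exact Real.log_le_log hpos (by linarith)
  have hc1 : (1:ℝ) ≤ (2 : ℝ) ^ (1 / q - 1 / p) := by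
    apply Real.one_le_rpow one_le_two
    have : 1 / p ≤ 1 / q := one_div_le_one_div_of_le hq hqp
    linarith
  have hpt2 : ∀ a ∈ frontier G, F q a ≤ (2 : ℝ) ^ (1 / q - 1 / p) * F p a := by
    intro a ha
    rw [hFeq p a ha, hFeq q a ha]
    set A := ‖x - y‖ / ‖x - a‖ with hA
    set B := ‖x - y‖ / ‖y - a‖ with hB
    have hA0 : 0 ≤ A := div_nonneg (norm_nonneg _) (norm_nonneg _)
    have hB0 : 0 ≤ B := div_nonneg (norm_nonneg _) (norm_nonneg _)
    set c := (2 : ℝ) ^ (1 / q - 1 / p) with hc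
    set t := (A ^ p + B ^ p) ^ (1 / p) with ht
    have ht0 : 0 ≤ t := by positivity
    have h := (pm_real' hq hqp hA0 hB0).2
    calc Real.log (1 + (A ^ q + B ^ q) ^ (1 / q))
        ≤ Real.log (1 + c * t) := by
          apply Real.log_le_log (by positivity)
          linarith
      _ ≤ Real.log ((1 + t) ^ c) := by
          apply Real.log_le_log (by positivity)
          exact one_add_mul_self_le_rpow_one_add (by linarith) hc1
      _ = c * Real.log (1 + t) := Real.log_rpow (by linarith) c
  -- uniform bounds: BddAbove
  have hbdd : ∀ r : ℝ, 0 < r → BddAbove {s : ℝ | ∃ a ∈ frontier G, s = F r a} := by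
    intro r hr
    refine ⟨Real.log (1 + (‖x - y‖ ^ r / dx ^ r + ‖x - y‖ ^ r / dy ^ r) ^ (1 / r)), ?_⟩
    rintro s ⟨a, ha, rfl⟩
    rw [hF]
    have h1 : ‖x - y‖ ^ r / ‖x - a‖ ^ r ≤ ‖x - y‖ ^ r / dx ^ r := by
      apply div_le_div_of_nonneg_left (by positivity) (by positivity)
      apply Real.rpow_le_rpow hdx.le ?_ hr.le
      have := Metric.infDist_le_dist_of_mem (x := x) ha
      rwa [dist_eq_norm] at this
    have h2 : ‖x - y‖ ^ r / ‖y - a‖ ^ r ≤ ‖x - y‖ ^ r / dy ^ r := by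
      apply div_le_div_of_nonneg_left (by positivity) (by positivity)
      apply Real.rpow_le_rpow hdy.le ?_ hr.le
      have := Metric.infDist_le_dist_of_mem (x := y) ha
      rwa [dist_eq_norm] at this
    apply Real.log_le_log (by positivity)
    have := Real.rpow_le_rpow (by positivity)
      (add_le_add h1 h2) (le_of_lt (one_div_pos.mpr hr))
    linarith
  have hne1 : {s : ℝ | ∃ a ∈ frontier G, s = F p a}.Nonempty := ⟨F p a₀, a₀, ha₀, rfl⟩
  have hne2 : {s : ℝ | ∃ a ∈ frontier G, s = F q a}.Nonempty := ⟨F q a₀, a₀, ha₀, rfl⟩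
  constructor
  · rw [hjP p, hjP q]
    apply csSup_le hne1
    rintro s ⟨a, ha, rfl⟩
    exact (hpt1 a ha).trans (le_csSup (hbdd q hq) ⟨a, ha, rfl⟩)
  · rw [hjP p, hjP q]
    apply csSup_le hne2
    rintro s ⟨a, ha, rfl⟩
    refine (hpt2 a ha).trans ?_
    exact mul_le_mul_of_nonneg_left (le_csSup (hbdd p hp) ⟨a, ha, rfl⟩) (by linarith)

end
end

section
/- Let k ≥ 1 and 0 ≤ s ≤ k + 1/k be real numbers. Then arcosh(1 + s²/2) ≤ (arcosh 3 / log 3) · log(1 + k·s). -/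
noncomputable section

lemma arcosh_eq_two_arsinh (s : ℝ) (hs : 0 ≤ s) :
    arcosh (1 + s ^ 2 / 2) = 2 * Real.arsinh (s / 2) := by
  have h1 : (0:ℝ) ≤ 1 + (s/2)^2 := by positivity
  have hS2 : Real.sqrt (1 + (s/2)^2) ^ 2 = 1 + (s/2)^2 := Real.sq_sqrt h1
  have hS0 : 0 ≤ Real.sqrt (1 + (s/2)^2) := Real.sqrt_nonneg _
  have hS1 : 1 ≤ Real.sqrt (1 + (s/2)^2) := by nlinarith [sq_nonneg (s/2)]
  have hsq : Real.sqrt ((1 + s^2/2)^2 - 1) = s * Real.sqrt (1 + (s/2)^2) := by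
    rw [show (1 + s^2/2)^2 - 1 = s^2 * (1 + (s/2)^2) by ring,
      Real.sqrt_mul (sq_nonneg s), Real.sqrt_sq hs]
  have key : 1 + s^2/2 + s * Real.sqrt (1 + (s/2)^2)
      = (s/2 + Real.sqrt (1 + (s/2)^2))^2 := by nlinarith [hS2]
  unfold arcosh Real.arsinh
  rw [hsq, key, Real.log_pow]
  push_cast
  ring

/-- Case `0 ≤ s ≤ 2`. -/
lemma lemA {C : ℝ} (hC1 : 3/2 ≤ C) (hC2 : C ≤ 2)
    (hC3 : C * Real.log 3 = 2 * Real.arsinh 1) :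
    ∀ s ∈ Set.Icc (0:ℝ) 2, 2 * Real.arsinh (s/2) ≤ C * Real.log (1 + s) := by
  set g : ℝ → ℝ := fun t => C * Real.log (1+t) - 2 * Real.arsinh (t/2) with hg
  set q : ℝ → ℝ := fun t => (1+t)^2 - C^2 * (1+(t/2)^2) with hqdef
  have hq0 : q 0 ≤ 0 := by simp only [hqdef]; nlinarith
  have hq2 : 0 ≤ q 2 := by simp only [hqdef]; nlinarith
  have hqc : ContinuousOn q (Set.Icc 0 2) := by fun_prop
  obtain ⟨r, hr02, hqr⟩ := intermediate_value_Icc (by norm_num : (0:ℝ) ≤ 2) hqc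
    (Set.mem_Icc.mpr ⟨hq0, hq2⟩)
  have qmono : ∀ a b : ℝ, 0 ≤ a → a ≤ b → b ≤ 2 → q a ≤ q b := by
    intro a b ha hab hb2
    simp only [hqdef]
    have hC4 : C^2 ≤ 4 := by nlinarith
    have h1 : 0 ≤ (b - a) * (2 + a + b - C^2*(a+b)/4) := by
      apply mul_nonneg (by linarith)
      nlinarith [mul_nonneg (show (0:ℝ) ≤ 4 - C^2 by linarith)
        (show (0:ℝ) ≤ a + b by linarith)]
    nlinarith [h1]
  -- derivative of g
  have hderiv : ∀ x : ℝ, 0 ≤ x →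
      HasDerivAt g (C * (1+x)⁻¹ - (Real.sqrt (1+(x/2)^2))⁻¹) x := by
    intro x hx
    have h1 : (0:ℝ) < 1 + x := by linarith
    have hlog : HasDerivAt (fun t : ℝ => Real.log (1+t)) (1+x)⁻¹ x := by
      have := (((hasDerivAt_id x).const_add (1:ℝ)).log (ne_of_gt h1))
      simpa using this
    have hars : HasDerivAt (fun t : ℝ => Real.arsinh (t/2))
        ((Real.sqrt (1+(x/2)^2))⁻¹ * (1/2)) x := by
      have h := (Real.hasDerivAt_arsinh (x/2)).comp x ((hasDerivAt_id x).div_const 2)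
      simpa [Function.comp_def] using h
    have := (hlog.const_mul C).sub (hars.const_mul 2)
    convert this using 1
    · rfl
    · rfl
    · rfl
    ring
  have hSfact : ∀ x : ℝ, 0 ≤ x →
      0 < Real.sqrt (1+(x/2)^2) ∧ Real.sqrt (1+(x/2)^2)^2 = 1+(x/2)^2 := by
    intro x hx
    exact ⟨Real.sqrt_pos.mpr (by positivity), Real.sq_sqrt (by positivity)⟩
  have hC0 : (0:ℝ) < C := by linarith
  -- monotone on [0, r]
  have hmono : MonotoneOn g (Set.Icc 0 r) := by
    apply monotoneOn_of_deriv_nonneg (convex_Icc _ _)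
    · intro x hx
      exact ((hderiv x hx.1).differentiableAt).continuousAt.continuousWithinAt
    · intro x hx
      rw [interior_Icc] at hx
      exact ((hderiv x hx.1.le).differentiableAt).differentiableWithinAt
    · intro x hx
      rw [interior_Icc] at hx
      rw [(hderiv x hx.1.le).deriv]
      obtain ⟨hSpos, hS2⟩ := hSfact x hx.1.le
      set S := Real.sqrt (1+(x/2)^2)
      have h1x : (0:ℝ) < 1 + x := by linarith [hx.1]
      have hqx : (1+x)^2 - C^2*(1+(x/2)^2) ≤ 0 := by
        have h := qmono x r hx.1.le hx.2.le hr02.2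
        rw [hqr] at h
        simpa [hqdef] using h
      have hCS : 0 < C * S := mul_pos hC0 hSpos
      have hsq : (1+x)^2 ≤ (C*S)^2 := by nlinarith [hqx, hS2, sq_nonneg C]
      have hkey : 1 + x ≤ C * S := by nlinarith [hsq, hCS]
      rw [sub_nonneg, show C * (1+x)⁻¹ = C/(1+x) by ring, show S⁻¹ = 1/S by ring,
        div_le_div_iff₀ hSpos h1x]
      linarith
  -- antitone on [r, 2]
  have hanti : AntitoneOn g (Set.Icc r 2) := by
    apply antitoneOn_of_deriv_nonpos (convex_Icc _ _)
    · intro x hx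
      exact ((hderiv x (hr02.1.trans hx.1)).differentiableAt).continuousAt.continuousWithinAt
    · intro x hx
      rw [interior_Icc] at hx
      exact ((hderiv x (hr02.1.trans hx.1.le)).differentiableAt).differentiableWithinAt
    · intro x hx
      rw [interior_Icc] at hx
      have hx0 : 0 ≤ x := hr02.1.trans hx.1.le
      rw [(hderiv x hx0).deriv]
      obtain ⟨hSpos, hS2⟩ := hSfact x hx0
      set S := Real.sqrt (1+(x/2)^2)
      have h1x : (0:ℝ) < 1 + x := by linarith
      have hqx : 0 ≤ (1+x)^2 - C^2*(1+(x/2)^2) := by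
        have h := qmono r x hr02.1 hx.1.le hx.2.le
        rw [hqr] at h
        simpa [hqdef] using h
      have hCS : 0 < C * S := mul_pos hC0 hSpos
      have hsq : (C*S)^2 ≤ (1+x)^2 := by nlinarith [hqx, hS2, sq_nonneg C]
      have hkey : C * S ≤ 1 + x := by nlinarith [hsq, hCS, h1x]
      rw [sub_nonpos, show C * (1+x)⁻¹ = C/(1+x) by ring, show S⁻¹ = 1/S by ring,
        div_le_div_iff₀ h1x hSpos]
      linarith
  have hg0 : g 0 = 0 := by simp [hg]
  have hg2 : g 2 = 0 := by
    simp only [hg]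
    rw [show (1:ℝ)+2 = 3 by norm_num, show (2:ℝ)/2 = 1 by norm_num]
    linarith [hC3]
  intro s hsmem
  rcases le_total s r with hsr | hrs
  · have := hmono (Set.mem_Icc.mpr ⟨le_refl 0, hr02.1⟩)
      (Set.mem_Icc.mpr ⟨hsmem.1, hsr⟩) hsmem.1
    rw [hg0] at this
    simp only [hg] at this
    linarith
  · have := hanti (Set.mem_Icc.mpr ⟨hrs, hsmem.2⟩)
      (Set.mem_Icc.mpr ⟨hr02.2, le_refl 2⟩) hsmem.2
    rw [hg2] at this
    simp only [hg] at this
    linarith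

/-- Case `k ≥ 1`, `s = k + 1/k`. -/
lemma lemB {C : ℝ} (hC1 : 3/2 ≤ C)
    (hC3 : C * Real.log 3 = 2 * Real.arsinh 1) :
    ∀ k : ℝ, 1 ≤ k → 2 * Real.arsinh ((k + 1/k)/2) ≤ C * Real.log (k^2 + 2) := by
  set F : ℝ → ℝ := fun t => C * Real.log (t^2+2) - 2 * Real.arsinh ((t + 1/t)/2) with hF
  have hderiv : ∀ x : ℝ, 1 ≤ x →
      HasDerivAt F (C * (2*x/(x^2+2))
        - (Real.sqrt (1+((x+1/x)/2)^2))⁻¹ * (1 - (x^2)⁻¹)) x := by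
    intro x hx
    have hx0 : (0:ℝ) < x := by linarith
    have hp : HasDerivAt (fun t : ℝ => t^2+2) (2*x) x := by
      simpa using (hasDerivAt_pow 2 x).add_const 2
    have hlog : HasDerivAt (fun t : ℝ => Real.log (t^2+2)) (2*x/(x^2+2)) x :=
      hp.log (by positivity)
    have hi : HasDerivAt (fun t : ℝ => 1/t) (-(x^2)⁻¹) x := by
      simpa [one_div] using hasDerivAt_inv (ne_of_gt hx0)
    have hinner : HasDerivAt (fun t : ℝ => (t + 1/t)/2) ((1 + -(x^2)⁻¹)/2) x :=
      ((hasDerivAt_id x).add hi).div_const 2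
    have hars : HasDerivAt (fun t : ℝ => Real.arsinh ((t + 1/t)/2))
        ((Real.sqrt (1+((x+1/x)/2)^2))⁻¹ * ((1 + -(x^2)⁻¹)/2)) x := by
      have h := (Real.hasDerivAt_arsinh ((x+1/x)/2)).comp x hinner
      simpa [Function.comp_def] using h
    have := (hlog.const_mul C).sub (hars.const_mul 2)
    convert this using 1
    · rfl
    · rfl
    · rfl
    ring
  have hmono : MonotoneOn F (Set.Ici 1) := by
    apply monotoneOn_of_deriv_nonneg (convex_Ici 1)
    · intro x hx
      exact ((hderiv x hx).differentiableAt).continuousAt.continuousWithinAt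
    · intro x hx
      rw [interior_Ici] at hx
      exact ((hderiv x hx.le).differentiableAt).differentiableWithinAt
    · intro x hx
      rw [interior_Ici] at hx
      have hx1 : (1:ℝ) ≤ x := hx.le
      have hx0 : (0:ℝ) < x := by linarith
      rw [(hderiv x hx1).deriv]
      have hu0 : (0:ℝ) ≤ 1 + ((x+1/x)/2)^2 := by positivity
      set S := Real.sqrt (1+((x+1/x)/2)^2) with hSdef
      have hSpos : 0 < S := Real.sqrt_pos.mpr (by positivity)
      have hxne : x ≠ 0 := ne_of_gt hx0
      have hid : 1 + ((x+1/x)/2)^2 = ((x^2+1)/(2*x))^2 + 1 := by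
        field_simp
        ring
      have hSge : (x^2+1)/(2*x) ≤ S := by
        rw [hSdef, hid, Real.le_sqrt (by positivity) (by positivity)]
        linarith
      have hSinv : S⁻¹ ≤ 2*x/(x^2+1) := by
        have h2 : (0:ℝ) < (x^2+1)/(2*x) := by positivity
        have := inv_anti₀ h2 hSge
        rwa [inv_div] at this
      have h1m : (0:ℝ) ≤ 1 - (x^2)⁻¹ := by
        have hx2 : (1:ℝ) ≤ x^2 := by nlinarith
        have : (x^2)⁻¹ ≤ 1 := inv_le_one_of_one_le₀ hx2
        linarith
      have step1 : S⁻¹ * (1 - (x^2)⁻¹) ≤ (2*x/(x^2+1)) * (1 - (x^2)⁻¹) :=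
        mul_le_mul_of_nonneg_right hSinv h1m
      have step2 : (2*x/(x^2+1)) * (1 - (x^2)⁻¹) ≤ C * (2*x/(x^2+2)) := by
        have e : (2*x/(x^2+1)) * (1 - (x^2)⁻¹) = 2*(x^2-1)/(x*(x^2+1)) := by
          field_simp
        have e2 : C * (2*x/(x^2+2)) = (2*C*x)/(x^2+2) := by ring
        rw [e, e2, div_le_div_iff₀ (by positivity) (by positivity)]
        nlinarith [mul_nonneg (sub_nonneg.mpr hC1) (by positivity : (0:ℝ) ≤ x^2*(x^2+1)),
          sq_nonneg x]
      linarith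
  have hF1 : F 1 = 0 := by
    simp only [hF]
    rw [show (1:ℝ)^2+2 = 3 by norm_num, show ((1:ℝ) + 1/1)/2 = 1 by norm_num]
    linarith [hC3]
  intro k hk
  have := hmono (Set.mem_Ici.mpr (le_refl 1)) (Set.mem_Ici.mpr hk) hk
  rw [hF1] at this
  simp only [hF] at this
  linarith

/-- If k ≥ 1 and 0 ≤ s ≤ k + 1/k then arcosh(1 + s²/2) ≤ (arcosh 3 / log 3) · log(1 + k·s). -/
theorem arcosh_le_const_mul_log (k s : ℝ) (hk : 1 ≤ k) (hs0 : 0 ≤ s) (hs : s ≤ k + 1 / k) :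
    arcosh (1 + s ^ 2 / 2) ≤ (arcosh 3 / Real.log 3) * Real.log (1 + k * s) := by
  have hlog3 : 0 < Real.log 3 := Real.log_pos (by norm_num)
  have hsqrt2 : Real.sqrt 2 ^ 2 = 2 := Real.sq_sqrt (by norm_num)
  have hsqrt2nn : (0:ℝ) ≤ Real.sqrt 2 := Real.sqrt_nonneg 2
  have h8 : Real.sqrt 8 = 2 * Real.sqrt 2 := by
    rw [show (8:ℝ) = 2^2 * 2 by norm_num, Real.sqrt_mul (by positivity),
      Real.sqrt_sq (by norm_num : (0:ℝ) ≤ 2)]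
  have harc3 : arcosh 3 = Real.log (3 + 2*Real.sqrt 2) := by
    unfold arcosh
    norm_num [h8]
  have h2arsinh : 2 * Real.arsinh 1 = Real.log (3 + 2*Real.sqrt 2) := by
    unfold Real.arsinh
    rw [show (1:ℝ) + 1^2 = 2 by norm_num,
      show (2:ℝ) * Real.log (1 + Real.sqrt 2) = Real.log ((1 + Real.sqrt 2)^2) by
        rw [Real.log_pow]; push_cast; ring]
    congr 1
    nlinarith [hsqrt2]
  have hA3 : arcosh 3 = 2 * Real.arsinh 1 := by rw [harc3, h2arsinh]
  set C := arcosh 3 / Real.log 3 with hCdef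
  have hC3 : C * Real.log 3 = 2 * Real.arsinh 1 := by
    rw [hCdef, div_mul_cancel₀ _ (ne_of_gt hlog3), hA3]
  have hC1 : 3/2 ≤ C := by
    rw [hCdef, le_div_iff₀ hlog3, harc3]
    have h27 : (27:ℝ) ≤ (3 + 2*Real.sqrt 2)^2 := by nlinarith [hsqrt2, hsqrt2nn]
    have hlog27 : Real.log 27 ≤ Real.log ((3 + 2*Real.sqrt 2)^2) :=
      Real.log_le_log (by norm_num) h27
    have e1 : Real.log 27 = 3 * Real.log 3 := by
      rw [show (27:ℝ) = 3^3 by norm_num, Real.log_pow]; push_cast; ring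
    have e2 : Real.log ((3 + 2*Real.sqrt 2)^2) = 2 * Real.log (3 + 2*Real.sqrt 2) := by
      rw [Real.log_pow]; push_cast; ring
    rw [e1] at hlog27
    rw [e2] at hlog27
    linarith
  have hC2 : C ≤ 2 := by
    rw [hCdef, div_le_iff₀ hlog3, harc3]
    have h9 : (3 + 2*Real.sqrt 2 : ℝ) ≤ 9 := by nlinarith [hsqrt2, hsqrt2nn]
    have := Real.log_le_log (by positivity) h9
    have e : Real.log 9 = 2 * Real.log 3 := by
      rw [show (9:ℝ) = 3^2 by norm_num, Real.log_pow]; push_cast; ring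
    linarith
  rw [arcosh_eq_two_arsinh s hs0]
  rcases le_or_gt s 2 with h2 | h2
  · have hA := lemA hC1 hC2 hC3 s (Set.mem_Icc.mpr ⟨hs0, h2⟩)
    have hks : 1 + s ≤ 1 + k * s := by nlinarith
    have hstep : Real.log (1+s) ≤ Real.log (1+k*s) := Real.log_le_log (by linarith) hks
    have := mul_le_mul_of_nonneg_left hstep (by linarith : (0:ℝ) ≤ C)
    linarith
  · -- s > 2
    have hs4 : (4:ℝ) ≤ s^2 := by nlinarith
    set d := Real.sqrt (s^2-4) with hd
    have hd2 : d^2 = s^2-4 := Real.sq_sqrt (by linarith)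
    have hd0 : 0 ≤ d := Real.sqrt_nonneg _
    set k0 := (s + d)/2 with hk0
    have hk0gt : 1 < k0 := by rw [hk0]; linarith
    have hk0pos : 0 < k0 := by linarith
    have hquad : k0^2 - s*k0 + 1 = 0 := by
      rw [hk0]; linear_combination hd2/4
    have hinv : 1/k0 = s - k0 := by
      rw [eq_comm, eq_div_iff (ne_of_gt hk0pos)]
      linear_combination -hquad
    have hsum : k0 + 1/k0 = s := by rw [hinv]; ring
    clear_value d k0
    have hkk0 : k0 ≤ k := by
      have hkpos : (0:ℝ) < k := by linarith
      have h1 : 0 ≤ k^2 - s*k + 1 := by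
        have h := mul_le_mul_of_nonneg_right hs (le_of_lt hkpos)
        have e : (k + 1/k)*k = k^2+1 := by field_simp
        linarith [h, e]
      have hfac : 0 ≤ (k - k0)*(k + k0 - s) := by nlinarith [h1, hquad]
      have hpos : 0 < k + k0 - s := by
        have hlt : 1/k0 < 1 := by rw [div_lt_one hk0pos]; exact hk0gt
        have e : k + k0 - s = k - 1/k0 := by rw [← hsum]; ring
        rw [e]; linarith
      nlinarith [hfac, hpos]
    have hB := lemB hC1 hC3 k0 (le_of_lt hk0gt)
    have hfin : k0^2 + 2 ≤ 1 + k*s := by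
      have : k0 * s ≤ k * s := mul_le_mul_of_nonneg_right hkk0 (by linarith)
      nlinarith [hquad, this]

    have hstep : Real.log (k0^2+2) ≤ Real.log (1+k*s) :=
      Real.log_le_log (by positivity) hfin
    have hmul := mul_le_mul_of_nonneg_left hstep (by linarith : (0:ℝ) ≤ C)
    calc 2 * Real.arsinh (s/2) = 2 * Real.arsinh ((k0 + 1/k0)/2) := by rw [hsum]
      _ ≤ C * Real.log (k0^2+2) := hB
      _ ≤ C * Real.log (1+k*s) := hmul

end
end

section
/- For every real number s ≥ 2, log(1 + s²/2 + √(s⁴/4 + s²)) ≤ (arcosh 3 / log 3) · log(1 + s²/2 + √(s⁴/4 − s²)), with equality when s = 2. -/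
noncomputable section

lemma sqrt8_eq : Real.sqrt 8 = 2 * Real.sqrt 2 := by
  rw [show (8:ℝ) = 2^2 * 2 by norm_num, Real.sqrt_mul (by positivity),
    Real.sqrt_sq (by norm_num)]

lemma arcosh_three : arcosh 3 = Real.log (3 + 2 * Real.sqrt 2) := by
  unfold arcosh
  norm_num [sqrt8_eq]

/-- For s ≥ 2, log(1 + s²/2 + √(s⁴/4 + s²)) ≤ (arcosh 3 / log 3) · log(1 + s²/2 + √(s⁴/4 − s²)),
with equality when s = 2. -/
theorem endpoint_log_inequality :
    (∀ s : ℝ, 2 ≤ s →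
      Real.log (1 + s ^ 2 / 2 + Real.sqrt (s ^ 4 / 4 + s ^ 2)) ≤
        (arcosh 3 / Real.log 3) *
          Real.log (1 + s ^ 2 / 2 + Real.sqrt (s ^ 4 / 4 - s ^ 2))) ∧
    Real.log (1 + (2 : ℝ) ^ 2 / 2 + Real.sqrt ((2 : ℝ) ^ 4 / 4 + (2 : ℝ) ^ 2)) =
      (arcosh 3 / Real.log 3) *
        Real.log (1 + (2 : ℝ) ^ 2 / 2 + Real.sqrt ((2 : ℝ) ^ 4 / 4 - (2 : ℝ) ^ 2)) := by
  have hr2 : Real.sqrt 2 ^ 2 = 2 := Real.sq_sqrt (by norm_num)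
  have hr2' : (1:ℝ) ≤ Real.sqrt 2 := by
    nlinarith [Real.sqrt_nonneg 2]
  have hlog3 : (0:ℝ) < Real.log 3 := Real.log_pos (by norm_num)
  have hc3 : (3:ℝ) ≤ 3 + 2 * Real.sqrt 2 := by nlinarith
  have hlogc : Real.log 3 ≤ Real.log (3 + 2 * Real.sqrt 2) :=
    Real.log_le_log (by norm_num) hc3
  constructor
  · intro s hs
    set A := 1 + s ^ 2 / 2 + Real.sqrt (s ^ 4 / 4 + s ^ 2) with hA
    set B := 1 + s ^ 2 / 2 + Real.sqrt (s ^ 4 / 4 - s ^ 2) with hB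
    have hs2 : (4:ℝ) ≤ s ^ 2 := by nlinarith
    have hu0 : 0 ≤ Real.sqrt (s ^ 4 / 4 + s ^ 2) := Real.sqrt_nonneg _
    have hv0 : 0 ≤ Real.sqrt (s ^ 4 / 4 - s ^ 2) := Real.sqrt_nonneg _
    have hu2 : Real.sqrt (s ^ 4 / 4 + s ^ 2) ^ 2 = s ^ 4 / 4 + s ^ 2 :=
      Real.sq_sqrt (by nlinarith)
    have hv2 : Real.sqrt (s ^ 4 / 4 - s ^ 2) ^ 2 = s ^ 4 / 4 - s ^ 2 :=
      Real.sq_sqrt (by nlinarith)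
    have hB3 : (3:ℝ) ≤ B := by rw [hB]; nlinarith
    have hA0 : (0:ℝ) < A := by rw [hA]; nlinarith
    -- key algebraic inequality: 3 A ≤ (3 + 2√2) B
    have key : 3 * A ≤ (3 + 2 * Real.sqrt 2) * B := by
      rw [hA, hB]
      nlinarith [mul_nonneg (mul_nonneg (by nlinarith : (0:ℝ) ≤ 2 * Real.sqrt 2 * (3 + 2 * Real.sqrt 2)) (by nlinarith : (0:ℝ) ≤ 1 + s ^ 2 / 2)) hv0,
        mul_nonneg hu0 hv0, sq_nonneg (Real.sqrt (s ^ 4 / 4 + s ^ 2) - Real.sqrt (s ^ 4 / 4 - s ^ 2)),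
        mul_nonneg (Real.sqrt_nonneg 2) (sub_nonneg.2 hs2)]
    have hAle : A ≤ (3 + 2 * Real.sqrt 2) / 3 * B := by rw [div_mul_eq_mul_div, le_div_iff₀ (by norm_num : (0:ℝ)<3)]; linarith
    have hlogA : Real.log A ≤ Real.log (3 + 2 * Real.sqrt 2) - Real.log 3 + Real.log B := by
      have h1 : Real.log A ≤ Real.log ((3 + 2 * Real.sqrt 2) / 3 * B) :=
        Real.log_le_log hA0 hAle
      rw [Real.log_mul (by positivity) (by linarith), Real.log_div (by positivity) (by norm_num)]
        at h1
      linarith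
    have hlogB : Real.log 3 ≤ Real.log B := Real.log_le_log (by norm_num) hB3
    rw [arcosh_three, div_mul_eq_mul_div, le_div_iff₀ hlog3]
    nlinarith [mul_nonneg (sub_nonneg.2 hlogc) (sub_nonneg.2 hlogB)]
  · have h0 : ((2:ℝ) ^ 4 / 4 - 2 ^ 2) = 0 := by norm_num
    rw [h0, Real.sqrt_zero]
    have : (1 + (2:ℝ) ^ 2 / 2 + 0) = 3 := by norm_num
    rw [this, arcosh_three, div_mul_cancel₀ _ (ne_of_gt hlog3)]
    norm_num [sqrt8_eq]

end
end
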